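/- Fréchet-frame reconstruction for the repetition system: each f_i belongs to X_F := ∩_{s∈ℕ} X_s, and for every f ∈ X_F and every s ∈ ℕ the partial sums ∑_{i=1}^{n} g_i(f)·f_i converge to f in the norm ‖·‖_s as n → ∞, where f_i := (1/t_i)·e_{σ(i)} if i is the smallest index in its σ-fiber (i.e. σ(i') < σ(i) for all i' < i) and f_i := 0 otherwise. -/

import Mathlib

noncomputable section

open Set

/-- The space `X_s = {f : ∑ i, a_{i,s}² ⟪f,e_i⟩² < ∞}` (as a subset of `X₀`). -/
def Xs {X₀ : Type*} [NormedAddCommGroup X₀] [InnerProductSpace ℝ X₀]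
    (e : ℕ → X₀) (a : ℕ → ℕ → ℝ) (s : ℕ) : Set X₀ :=
  {f | Summable fun i => (a i s * (inner ℝ f (e i) : ℝ)) ^ 2}

/-- The inner product `⟪f,h⟫_s = ∑ i, a_{i,s}² ⟪f,e_i⟩₀ ⟪h,e_i⟩₀`. -/
def innerS {X₀ : Type*} [NormedAddCommGroup X₀] [InnerProductSpace ℝ X₀]
    (e : ℕ → X₀) (a : ℕ → ℕ → ℝ) (s : ℕ) (f h : X₀) : ℝ :=
  ∑' i, (a i s) ^ 2 * (inner ℝ f (e i) : ℝ) * (inner ℝ h (e i) : ℝ)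

/-- The norm `‖f‖_s = (∑ i, a_{i,s}² ⟪f,e_i⟩₀²)^(1/2)`. -/
def normS {X₀ : Type*} [NormedAddCommGroup X₀] [InnerProductSpace ℝ X₀]
    (e : ℕ → X₀) (a : ℕ → ℕ → ℝ) (s : ℕ) (f : X₀) : ℝ :=
  Real.sqrt (∑' i, (a i s * (inner ℝ f (e i) : ℝ)) ^ 2)

/-- `M_s^c`: the set of `f ∈ X_s` with `|c i| ≤ |g i (f)| = |t i * ⟪f, e (σ i)⟫₀|`. -/
def MSetS {X₀ : Type*} [NormedAddCommGroup X₀] [InnerProductSpace ℝ X₀]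
    (e : ℕ → X₀) (a : ℕ → ℕ → ℝ) (σ : ℕ → ℕ) (t : ℕ → ℝ) (s : ℕ) (c : ℕ → ℝ) :
    Set X₀ :=
  {f | f ∈ Xs e a s ∧ ∀ i, |c i| ≤ |t i * (inner ℝ f (e (σ i)) : ℝ)|}


open Classical in
/-- The reconstruction sequence: `f i = (1/t i) • e (σ i)` if `i` is the smallest
index in its `σ`-fiber, and `f i = 0` otherwise. -/
def fvec {X₀ : Type*} [NormedAddCommGroup X₀] [InnerProductSpace ℝ X₀]
    (e : ℕ → X₀) (σ : ℕ → ℕ) (t : ℕ → ℝ) : ℕ → X₀ :=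
  fun i => if ∀ i' < i, σ i' < σ i then (t i)⁻¹ • e (σ i) else 0

section Aux

variable {X₀ : Type*} [NormedAddCommGroup X₀] [InnerProductSpace ℝ X₀]

lemma sum_fvec (e : ℕ → X₀) (σ : ℕ → ℕ) (t : ℕ → ℝ)
    (hσmono : Monotone σ) (ht : ∀ i, t i ≠ 0) (f : X₀) (n : ℕ) :
    ∑ i ∈ Finset.range n, (t i * (inner ℝ f (e (σ i)) : ℝ)) • fvec e σ t i
      = ∑ k ∈ (Finset.range n).image σ, ((inner ℝ f (e k) : ℝ)) • e k := by
  induction n with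
  | zero => simp
  | succ n ih =>
    rw [Finset.sum_range_succ, ih, Finset.range_add_one, Finset.image_insert]
    by_cases h : ∀ i' < n, σ i' < σ n
    · have hnot : σ n ∉ (Finset.range n).image σ := by
        simp only [Finset.mem_image, Finset.mem_range, not_exists]
        rintro i ⟨hi, hσi⟩
        exact absurd hσi (ne_of_lt (h i hi))
      rw [Finset.sum_insert hnot]
      have hfv : fvec e σ t n = (t n)⁻¹ • e (σ n) := if_pos h
      rw [hfv, smul_smul, add_comm]
      rw [mul_comm (t n), mul_assoc, mul_inv_cancel₀ (ht n), mul_one]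
    · have hmem : σ n ∈ (Finset.range n).image σ := by
        push_neg at h
        obtain ⟨i, hi, hle⟩ := h
        exact Finset.mem_image.mpr ⟨i, Finset.mem_range.mpr hi,
          le_antisymm (hσmono hi.le) hle⟩
      have hfv : fvec e σ t n = 0 := if_neg h
      rw [Finset.insert_eq_self.mpr hmem, hfv, smul_zero, add_zero]

end Aux


theorem frechet_frame_reconstruction
    {X₀ : Type*} [NormedAddCommGroup X₀] [InnerProductSpace ℝ X₀] [CompleteSpace X₀]
    (e : HilbertBasis ℕ ℝ X₀) (a : ℕ → ℕ → ℝ)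
    (ha0 : ∀ i, a i 0 = 1) (ha1 : ∀ i s, 1 ≤ a i s)
    (hamono : ∀ i s, a i s ≤ a i (s + 1))
    (σ : ℕ → ℕ) (t : ℕ → ℝ)
    (hσmono : Monotone σ) (hσsurj : Function.Surjective σ)
    (hσtend : Filter.Tendsto σ Filter.atTop Filter.atTop)
    (ht : ∀ i, t i ≠ 0) :
    (∀ i : ℕ, fvec (⇑e) σ t i ∈ ⋂ s, Xs (⇑e) a s) ∧
    (∀ f ∈ ⋂ s, Xs (⇑e) a s, ∀ s : ℕ,
      Filter.Tendsto
        (fun n => normS (⇑e) a s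
          (f - ∑ i ∈ Finset.range n, (t i * (inner ℝ f (e (σ i)) : ℝ)) • fvec (⇑e) σ t i))
        Filter.atTop (nhds 0)) := by
  classical
  have horth : ∀ i j : ℕ, (inner ℝ (e i) (e j) : ℝ) = if i = j then 1 else 0 :=
    orthonormal_iff_ite.mp e.orthonormal
  constructor
  · intro i
    rw [Set.mem_iInter]
    intro s
    by_cases h : ∀ i' < i, σ i' < σ i
    · have hfv : fvec (⇑e) σ t i = (t i)⁻¹ • e (σ i) := if_pos h
      refine summable_of_ne_finset_zero (s := {σ i}) ?_
      intro k hk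
      simp only [Finset.mem_singleton] at hk
      have : (inner ℝ ((t i)⁻¹ • e (σ i)) (e k) : ℝ) = 0 := by
        rw [real_inner_smul_left, horth, if_neg (Ne.symm hk), mul_zero]
      simp [Xs, hfv, this]
    · have hfv : fvec (⇑e) σ t i = 0 := if_neg h
      simp only [Xs, hfv, Set.mem_setOf_eq, inner_zero_left, mul_zero]
      simpa using summable_zero
  · intro f hf s
    set c : ℕ → ℝ := fun k => (inner ℝ f (e k) : ℝ) with hc
    have hsum : Summable fun k => (a k s * c k) ^ 2 := Set.mem_iInter.mp hf s
    set F : ℕ → Finset ℕ := fun n => (Finset.range n).image σ with hF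
    have hinner : ∀ n k,
        (inner ℝ (f - ∑ i ∈ Finset.range n, (t i * (inner ℝ f (e (σ i)) : ℝ)) • fvec (⇑e) σ t i)
          (e k) : ℝ) = if k ∈ F n then 0 else c k := by
      intro n k
      rw [inner_sub_left, sum_fvec (⇑e) σ t hσmono ht f n, sum_inner]
      simp only [real_inner_smul_left, horth, mul_ite, mul_one, mul_zero]
      rw [Finset.sum_ite_eq' (F n) k c]
      by_cases hk : k ∈ F n <;> simp [hk, hc]
    have hnorm : ∀ n,
        normS (⇑e) a s
          (f - ∑ i ∈ Finset.range n, (t i * (inner ℝ f (e (σ i)) : ℝ)) • fvec (⇑e) σ t i)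
        = Real.sqrt (∑' k : {x // x ∉ F n}, (a k s * c k) ^ 2) := by
      intro n
      rw [normS]
      congr 1
      have heq : (fun k => (a k s *
          (inner ℝ (f - ∑ i ∈ Finset.range n, (t i * (inner ℝ f (e (σ i)) : ℝ)) • fvec (⇑e) σ t i)
            (e k) : ℝ)) ^ 2)
          = Set.indicator {x | x ∉ F n} (fun k => (a k s * c k) ^ 2) := by
        funext k
        rw [hinner n k]
        by_cases hk : k ∈ F n <;> simp [Set.indicator, hk]
      rw [heq, ← tsum_subtype]
      rfl
    have hFtend : Filter.Tendsto F Filter.atTop Filter.atTop := by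
      refine Filter.tendsto_atTop_finset_of_monotone ?_ ?_
      · intro m n hmn
        exact Finset.image_subset_image (Finset.range_subset_range.mpr hmn)
      · intro k
        obtain ⟨i, hi⟩ := hσsurj k
        exact ⟨i + 1, Finset.mem_image.mpr ⟨i, Finset.mem_range.mpr (Nat.lt_succ_self i),
          hi⟩⟩
    have htail : Filter.Tendsto
        (fun n => ∑' k : {x // x ∉ F n}, (a k s * c k) ^ 2)
        Filter.atTop (nhds 0) :=
      (tendsto_tsum_compl_atTop_zero (fun k => (a k s * c k) ^ 2)).comp hFtend
    have hsqrt : Filter.Tendsto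
        (fun n => Real.sqrt (∑' k : {x // x ∉ F n}, (a k s * c k) ^ 2))
        Filter.atTop (nhds 0) := by
      have := (Real.continuous_sqrt.tendsto 0).comp htail
      rw [Real.sqrt_zero] at this
      exact this
    exact hsqrt.congr (fun n => (hnorm n).symm)
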